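/- Let G be a finite group that is not an elementary abelian 2-group, and let a ∈ G be an element of order o ≥ 3. Suppose S, K ⊆ G with S ∩ K⁻¹ = {1, a}. Consider the bipartite digraph on two copies G₁, G₂ of G with arcs (g₁, (sg)₂) for s ∈ S and (g₂, (kg)₁) for k ∈ K. Then the undirected edges of this digraph (pairs joined by arcs in both directions) form a disjoint union of cycles, each of length 2o. -/

import Mathlib

namespace PDR

/-- `σ` is an automorphism of the digraph `D`. -/
def IsDigraphAut {V : Type*} (D : Digraph V) (σ : Equiv.Perm V) : Prop :=
  ∀ u v : V, D.Adj (σ u) (σ v) ↔ D.Adj u v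

/-- The automorphism group of a digraph, as a subgroup of the symmetric group. -/
def digraphAut {V : Type*} (D : Digraph V) : Subgroup (Equiv.Perm V) where
  carrier := {σ | IsDigraphAut D σ}
  one_mem' := by intro u v; simp
  mul_mem' := by
    intro σ τ hσ hτ u v
    simpa [Equiv.Perm.mul_apply] using (hσ (τ u) (τ v)).trans (hτ u v)
  inv_mem' := by
    intro σ hσ u v
    simpa using (hσ (σ⁻¹ u) (σ⁻¹ v)).symm

/-- A digraph is regular if all vertices have the same out-valency and in-valency. -/
def IsRegularDigraph {V : Type*} (D : Digraph V) : Prop :=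
  ∃ d : ℕ, ∀ v : V, {u | D.Adj v u}.ncard = d ∧ {u | D.Adj u v}.ncard = d

/-- `D` is an `n`-partite digraphical representation of `G`: `D` is regular,
`Aut(D) ≅ G`, `Aut(D)` is semiregular with exactly `n` orbits, and each orbit
induces an empty sub-digraph. -/
def IsNPDR (G : Type*) [Group G] (n : ℕ) {V : Type*} (D : Digraph V) : Prop :=
  IsRegularDigraph D ∧
  Nonempty (G ≃* digraphAut D) ∧
  (∀ σ ∈ digraphAut D, ∀ v : V, σ v = v → σ = 1) ∧
  (∃ f : V → Fin n, Function.Surjective f ∧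
     ∀ u v : V, f u = f v ↔ ∃ σ ∈ digraphAut D, σ u = v) ∧
  (∀ u v : V, (∃ σ ∈ digraphAut D, σ u = v) → ¬ D.Adj u v)

/-- The `n`-Cayley digraph of `G` with connection sets `T i j`:
arcs `(g,i) → (t*g, j)` for `t ∈ T i j`. -/
def nCay (G : Type*) [Group G] (n : ℕ) (T : ZMod n → ZMod n → Set G) :
    Digraph (G × ZMod n) where
  Adj p q := q.1 * p.1⁻¹ ∈ T p.2 q.2

/-- Right translation `(x, i) ↦ (x·g, i)`. -/
def rtransl (G : Type*) [Group G] (n : ℕ) (g : G) : Equiv.Perm (G × ZMod n) :=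
  (Equiv.mulRight g).prodCongr (Equiv.refl (ZMod n))


/-- in the bipartite digraph on two copies of `G` with arcs
`g₁ → (sg)₂` (`s ∈ S`) and `g₂ → (kg)₁` (`k ∈ K`), where `S ∩ K⁻¹ = {1, a}` and
`a` has order `o ≥ 3` (in a group that is not elementary abelian of exponent 2),
the undirected edges (pairs of opposite arcs) form a disjoint union of cycles of
length `2o`: the undirected-edge graph is `2`-regular and every connected component
has exactly `2o` vertices. -/
theorem statement12 (G : Type) [Group G] [Finite G]
    (h2 : ¬ ∀ g : G, g ^ 2 = 1) (a : G) (ho : 3 ≤ orderOf a)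
    (S K : Set G) (hSK : S ∩ K⁻¹ = {1, a}) :
    ∀ U : SimpleGraph (G × Bool),
      (∀ p q : G × Bool, U.Adj p q ↔
        ((p.2 = false ∧ q.2 = true ∧ q.1 * p.1⁻¹ ∈ S ∧ p.1 * q.1⁻¹ ∈ K) ∨
         (p.2 = true ∧ q.2 = false ∧ p.1 * q.1⁻¹ ∈ S ∧ q.1 * p.1⁻¹ ∈ K))) →
      (∀ v : G × Bool, (U.neighborSet v).ncard = 2) ∧
      (∀ v : G × Bool, (U.connectedComponentMk v).supp.ncard = 2 * orderOf a) := by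
  intro U hU
  have ha1 : a ≠ 1 := by
    intro h; rw [h, orderOf_one] at ho; omega
  have hmem : ∀ x : G, x ∈ S ∧ x⁻¹ ∈ K ↔ x = 1 ∨ x = a := by
    intro x
    have := Set.ext_iff.mp hSK x
    simpa [Set.mem_inv] using this
  -- adjacency characterizations
  have hF : ∀ g h : G, U.Adj (g, false) (h, true) ↔ (h = g ∨ h = a * g) := by
    intro g h
    rw [hU]
    simp only [and_true, true_and, false_and, and_false, false_or, or_false,
      Bool.true_eq_false, Bool.false_eq_true]
    constructor
    · rintro ⟨hs, hk⟩
      have : h * g⁻¹ = 1 ∨ h * g⁻¹ = a := (hmem _).mp ⟨hs, by simpa using hk⟩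
      rcases this with h1 | h1
      · left; exact mul_inv_eq_one.mp h1
      · right; rw [eq_comm, ← h1]; group
    · rintro (rfl | rfl)
      · have := (hmem 1).mpr (Or.inl rfl); simpa using this
      · have h3 := (hmem a).mpr (Or.inr rfl)
        have e1 : a * g * g⁻¹ = a := by group
        have e2 : g * (a * g)⁻¹ = a⁻¹ := by group
        rw [e1, e2]
        exact h3
  have hT : ∀ g h : G, U.Adj (g, true) (h, false) ↔ (h = g ∨ h = a⁻¹ * g) := by
    intro g h
    rw [U.adj_comm, hF]
    constructor
    · rintro (rfl | h1)
      · exact Or.inl rfl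
      · right; rw [h1]; group
    · rintro (rfl | rfl)
      · exact Or.inl rfl
      · right; group
  have hBB : ∀ (g h : G) (b : Bool), ¬ U.Adj (g, b) (h, b) := by
    intro g h b hadj
    rcases (hU _ _).mp hadj with ⟨h1, h2', _⟩ | ⟨h1, h2', _⟩ <;> simp_all
  constructor
  · -- degree 2
    rintro ⟨g, b⟩
    cases b
    · have : U.neighborSet (g, false) = {(g, true), (a * g, true)} := by
        ext ⟨h, c⟩
        cases c
        · simp [SimpleGraph.mem_neighborSet, hBB]
        · simp [SimpleGraph.mem_neighborSet, hF, Prod.ext_iff]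
      rw [this, Set.ncard_pair]
      simp [Prod.ext_iff]
      intro h; exact ha1 (by simpa using congrArg (· * g⁻¹) h.symm)
    · have : U.neighborSet (g, true) = {(g, false), (a⁻¹ * g, false)} := by
        ext ⟨h, c⟩
        cases c
        · simp [SimpleGraph.mem_neighborSet, hT, Prod.ext_iff]
        · simp [SimpleGraph.mem_neighborSet, hBB]
      rw [this, Set.ncard_pair]
      simp [Prod.ext_iff]
      intro h
      have : a⁻¹ = 1 := by simpa using congrArg (· * g⁻¹) h.symm
      exact ha1 (by simpa using congrArg (·⁻¹) this)
  · rintro ⟨g, b⟩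
    -- forward: reachability implies zpowers
    have fwd : ∀ p q : G × Bool, U.Reachable p q → q.1 * p.1⁻¹ ∈ Subgroup.zpowers a := by
      intro p q hr
      rw [SimpleGraph.reachable_iff_reflTransGen] at hr
      induction hr with
      | refl => simpa using one_mem _
      | tail _ hadj ih =>
        rename_i x y _
        have hmem2 : y.1 * x.1⁻¹ ∈ Subgroup.zpowers a := by
          rcases (hU _ _).mp hadj with ⟨_, _, hs, hk⟩ | ⟨_, _, hs, hk⟩
          · rcases (hmem _).mp ⟨hs, by simpa using hk⟩ with h1 | h1 <;> rw [h1]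
            · exact one_mem _
            · exact Subgroup.mem_zpowers a
          · have : x.1 * y.1⁻¹ = 1 ∨ x.1 * y.1⁻¹ = a := (hmem _).mp ⟨hs, by simpa using hk⟩
            have hy : y.1 * x.1⁻¹ = (x.1 * y.1⁻¹)⁻¹ := by group
            rcases this with h1 | h1 <;> rw [hy, h1]
            · simpa using one_mem _
            · exact Subgroup.inv_mem _ (Subgroup.mem_zpowers a)
        have : y.1 * p.1⁻¹ = (y.1 * x.1⁻¹) * (x.1 * p.1⁻¹) := by group
        rw [this]
        exact mul_mem hmem2 ih
    -- basic steps
    have flip : ∀ (x : G) (c : Bool), U.Adj (x, c) (x, !c) := by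
      intro x c
      cases c
      · exact (hF x x).mpr (Or.inl rfl)
      · exact (hT x x).mpr (Or.inl rfl)
    have stepUp : ∀ x : G, U.Reachable (x, false) (a * x, false) := by
      intro x
      exact ((hF x (a * x)).mpr (Or.inr rfl)).reachable.trans (flip (a*x) true).reachable
    have stepDown : ∀ x : G, U.Reachable (x, false) (a⁻¹ * x, false) := by
      intro x
      exact (flip x false).reachable.trans ((hT x (a⁻¹ * x)).mpr (Or.inr rfl)).reachable
    have reachPow : ∀ n : ℤ, U.Reachable (g, false) (a ^ n * g, false) := by
      intro n
      induction n using Int.induction_on with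
      | zero => simpa using SimpleGraph.Reachable.refl _
      | succ k ih =>
        have he : a ^ ((k : ℤ) + 1) * g = a * (a ^ (k : ℤ) * g) := by
          rw [add_comm, zpow_add, zpow_one, mul_assoc]
        rw [he]
        exact ih.trans (stepUp _)
      | pred k ih =>
        have he : a ^ (-(k : ℤ) - 1) * g = a⁻¹ * (a ^ (-(k : ℤ)) * g) := by
          rw [sub_eq_add_neg, add_comm, zpow_add, zpow_neg_one, mul_assoc]
        rw [he]
        exact ih.trans (stepDown _)
    have reachAll : ∀ (x : G) (c : Bool), x * g⁻¹ ∈ Subgroup.zpowers a →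
        U.Reachable (g, false) (x, c) := by
      intro x c hx
      obtain ⟨n, hn⟩ := Subgroup.mem_zpowers_iff.mp hx
      have hxg : x = a ^ n * g := by rw [hn]; group
      subst hxg
      cases c
      · exact reachPow n
      · exact (reachPow n).trans (flip _ false).reachable
    -- component supp
    have hsupp : (U.connectedComponentMk (g, b)).supp
        = {p : G × Bool | p.1 * g⁻¹ ∈ Subgroup.zpowers a} := by
      ext p
      rw [SimpleGraph.ConnectedComponent.mem_supp_iff, SimpleGraph.ConnectedComponent.eq]
      constructor
      · intro hr; exact fwd _ _ hr.symm
      · intro hp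
        have h1 : U.Reachable (g, false) p := reachAll p.1 p.2 hp
        have h2 : U.Reachable (g, false) (g, b) := by
          cases b
          · exact SimpleGraph.Reachable.refl _
          · exact (flip g false).reachable
        exact h1.symm.trans h2
    rw [hsupp]
    -- cardinality
    have hcard : {p : G × Bool | p.1 * g⁻¹ ∈ Subgroup.zpowers a}.ncard
        = Nat.card ((Subgroup.zpowers a) × Bool) := by
      rw [← Nat.card_coe_set_eq]
      refine Nat.card_congr ⟨fun p => (⟨p.1.1 * g⁻¹, p.2⟩, p.1.2),
        fun q => ⟨(q.1.1 * g, q.2), by simp⟩, ?_, ?_⟩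
      · rintro ⟨⟨x, c⟩, hx⟩; simp [mul_assoc]
      · rintro ⟨⟨x, hx⟩, c⟩; simp [mul_assoc]
    rw [hcard, Nat.card_prod, Nat.card_zpowers, Nat.card_eq_fintype_card]
    simp [mul_comm]

end PDR
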